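/- Assume the groups are sorted so that ρ_1 < ρ_2 < ⋯ < ρ_M. If c* is an optimal pushing strategy with 0 < c*_m < 1 for some index m, then c*_m satisfies the watershed equation at index m, i.e. B ρ_m (∑_{i=1}^m t_i − t_m c*_m) + 1 = exp(B ∑_{j=m+1}^M t_j ρ_j + B t_m ρ_m c*_m). -/

import Mathlib

open Real Set

private lemma gderiv (S0 P0 a b B q x : ℝ) :
    HasDerivAt (fun y => (S0 + a * (q - y)) * (1 - Real.exp (-B * (P0 + b * (y - q)))))
      (-a * (1 - Real.exp (-B * (P0 + b * (x - q)))) +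
        (S0 + a * (q - x)) * (B * b * Real.exp (-B * (P0 + b * (x - q))))) x := by
  have h1 : HasDerivAt (fun y : ℝ => S0 + a * (q - y)) (-a) x := by
    have := (((hasDerivAt_id x).const_sub q).const_mul a).const_add S0
    exact this.congr_deriv (by ring)
  have hu : HasDerivAt (fun y : ℝ => -B * (P0 + b * (y - q))) (-B * b) x := by
    have := ((((hasDerivAt_id x).sub_const q).const_mul b).const_add P0).const_mul (-B)
    exact this.congr_deriv (by ring)
  have h2 : HasDerivAt (fun y : ℝ => 1 - Real.exp (-B * (P0 + b * (y - q))))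
      (B * b * Real.exp (-B * (P0 + b * (x - q)))) x := by
    have := hu.exp.const_sub 1
    exact this.congr_deriv (by ring)
  have := h1.mul h2
  exact this.congr_deriv (by ring)

/-- With groups sorted in strictly increasing order of sharing
probability, if an optimal pushing strategy has `0 < c m < 1`, then `c m` satisfies
the watershed equation at index `m`. -/
theorem stmt_4 (M : ℕ) (hM : 1 ≤ M) (B : ℝ) (hB : 0 < B)
    (t ρ : Fin M → ℝ) (ht : ∀ i, 0 < t i) (hρ : ∀ i, 0 < ρ i ∧ ρ i ≤ 1)
    (hsort : StrictMono ρ)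
    (c : Fin M → ℝ) (hc : ∀ i, 0 ≤ c i ∧ c i ≤ 1)
    (hopt : ∀ d : Fin M → ℝ, (∀ i, 0 ≤ d i ∧ d i ≤ 1) →
      (∑ i, t i * (1 - d i)) * (1 - Real.exp (-B * ∑ k, t k * ρ k * d k)) ≤
      (∑ i, t i * (1 - c i)) * (1 - Real.exp (-B * ∑ k, t k * ρ k * c k)))
    (m : Fin M) (hm0 : 0 < c m) (hm1 : c m < 1) :
    B * ρ m * ((∑ i ∈ Finset.Iic m, t i) - t m * c m) + 1 =
      Real.exp (B * (∑ j ∈ Finset.Ioi m, t j * ρ j) + B * t m * ρ m * c m) := by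
  classical
  set S0 : ℝ := ∑ i, t i * (1 - c i) with hS0def
  set P0 : ℝ := ∑ k, t k * ρ k * c k with hP0def
  set E : ℝ := Real.exp (-B * P0) with hEdef
  -- sum identities for updates
  have hsum1 : ∀ (j : Fin M) (x : ℝ),
      ∑ i, t i * (1 - Function.update c j x i) = S0 + t j * (c j - x) := by
    intro j x
    have h := Finset.sum_sub_distrib (s := Finset.univ)
      (f := fun i => t i * (1 - Function.update c j x i)) (g := fun i => t i * (1 - c i))
    have h2 : ∑ i, (t i * (1 - Function.update c j x i) - t i * (1 - c i))
        = t j * (c j - x) := by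
      rw [Finset.sum_eq_single j]
      · simp [Function.update_self]; ring
      · intro i _ hij; simp [Function.update_of_ne hij]
      · simp
    rw [h2] at h
    linarith [h]
  have hsum2 : ∀ (j : Fin M) (x : ℝ),
      ∑ k, t k * ρ k * Function.update c j x k = P0 + t j * ρ j * (x - c j) := by
    intro j x
    have h := Finset.sum_sub_distrib (s := Finset.univ)
      (f := fun k => t k * ρ k * Function.update c j x k) (g := fun k => t k * ρ k * c k)
    have h2 : ∑ k, (t k * ρ k * Function.update c j x k - t k * ρ k * c k)
        = t j * ρ j * (x - c j) := by
      rw [Finset.sum_eq_single j]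
      · simp [Function.update_self]; ring
      · intro i _ hij; simp [Function.update_of_ne hij]
      · simp
    rw [h2] at h
    linarith [h]
  set g : Fin M → ℝ → ℝ := fun j x =>
    (S0 + t j * (c j - x)) * (1 - Real.exp (-B * (P0 + t j * ρ j * (x - c j)))) with hgdef
  have hgc : ∀ j : Fin M, g j (c j) = S0 * (1 - E) := by
    intro j; simp [hgdef, hEdef]
  have hmax : ∀ (j : Fin M), IsMaxOn (g j) (Set.Icc (0:ℝ) 1) (c j) := by
    intro j x hx
    have hd : ∀ i, 0 ≤ Function.update c j x i ∧ Function.update c j x i ≤ 1 := by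
      intro i
      rcases eq_or_ne i j with rfl | hij
      · simpa [Function.update_self] using hx
      · simp [Function.update_of_ne hij]; exact ⟨(hc i).1, (hc i).2⟩
    have := hopt (Function.update c j x) hd
    rw [hsum1, hsum2] at this
    simp only [Set.mem_setOf_eq]
    rw [hgc j]
    simpa [hgdef, hEdef, hS0def, hP0def] using this
  have hD : ∀ j : Fin M, HasDerivAt (g j)
      (-(t j) * (1 - E) + S0 * (B * (t j * ρ j) * E)) (c j) := by
    intro j
    have := gderiv S0 P0 (t j) (t j * ρ j) B (c j) (c j)
    simpa [hgdef, hEdef] using this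
  -- E facts
  have hP0pos : 0 < P0 := by
    apply Finset.sum_pos'
    · intro i _
      have := (hc i).1; have := (ht i).le; have := (hρ i).1.le; positivity
    · exact ⟨m, Finset.mem_univ m, by
        have := ht m; have := (hρ m).1; positivity⟩
  have hEpos : 0 < E := Real.exp_pos _
  have hElt : E < 1 := by
    rw [hEdef, Real.exp_lt_one_iff]
    nlinarith
  -- first-order condition at m
  have hkey : -(t m) * (1 - E) + S0 * (B * (t m * ρ m) * E) = 0 := by
    have hnb : Set.Icc (0:ℝ) 1 ∈ nhds (c m) := Icc_mem_nhds hm0 hm1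
    exact ((hmax m).isLocalMax hnb).hasDerivAt_eq_zero (hD m)
  have heq : 1 - E = S0 * (B * ρ m) * E := by
    have h2 : t m * ((1 - E) - S0 * (B * ρ m) * E) = 0 := by linear_combination -hkey
    rcases mul_eq_zero.mp h2 with h | h
    · exact absurd h (ne_of_gt (ht m))
    · linarith
  have hS0pos : 0 < S0 := by
    have h1 : 0 < 1 - E := by linarith
    have h2 : 0 < B * ρ m * E := by have := (hρ m).1; positivity
    nlinarith
  -- derivative value at other coordinates
  have hDval : ∀ j : Fin M, -(t j) * (1 - E) + S0 * (B * (t j * ρ j) * E)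
      = t j * B * S0 * E * (ρ j - ρ m) := by
    intro j; linear_combination (-(t j)) * heq
  -- structural facts
  have hup : ∀ j : Fin M, m < j → c j = 1 := by
    intro j hj
    by_contra h
    have hcj1 : c j < 1 := lt_of_le_of_ne (hc j).2 h
    have hmaxon : IsLocalMaxOn (g j) (Set.Icc (0:ℝ) 1) (c j) :=
      (hmax j).filter_mono inf_le_right
    have hcone : (1 - c j) ∈ posTangentConeAt (Set.Icc (0:ℝ) 1) (c j) := by
      apply sub_mem_posTangentConeAt_of_segment_subset
      rw [segment_eq_Icc hcj1.le]
      exact Set.Icc_subset_Icc (hc j).1 le_rfl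
    have hfd := hmaxon.hasFDerivWithinAt_nonpos (hD j).hasDerivWithinAt.hasFDerivWithinAt hcone
    simp only [ContinuousLinearMap.toSpanSingleton_apply,
      smul_eq_mul] at hfd
    have hDpos : 0 < -(t j) * (1 - E) + S0 * (B * (t j * ρ j) * E) := by
      rw [hDval]
      exact mul_pos (mul_pos (mul_pos (mul_pos (ht j) hB) hS0pos) hEpos)
        (sub_pos.mpr (hsort hj))
    nlinarith
  have hdown : ∀ j : Fin M, j < m → c j = 0 := by
    intro j hj
    by_contra h
    have hcj0 : 0 < c j := lt_of_le_of_ne (hc j).1 (Ne.symm h)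
    have hmaxon : IsLocalMaxOn (g j) (Set.Icc (0:ℝ) 1) (c j) :=
      (hmax j).filter_mono inf_le_right
    have hcone : (0 - c j) ∈ posTangentConeAt (Set.Icc (0:ℝ) 1) (c j) := by
      apply sub_mem_posTangentConeAt_of_segment_subset
      rw [segment_symm, segment_eq_Icc hcj0.le]
      exact Set.Icc_subset_Icc le_rfl (hc j).2
    have hfd := hmaxon.hasFDerivWithinAt_nonpos (hD j).hasDerivWithinAt.hasFDerivWithinAt hcone
    simp only [ContinuousLinearMap.toSpanSingleton_apply,
      smul_eq_mul] at hfd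
    have hDneg : -(t j) * (1 - E) + S0 * (B * (t j * ρ j) * E) < 0 := by
      rw [hDval]
      exact mul_neg_of_pos_of_neg (mul_pos (mul_pos (mul_pos (ht j) hB) hS0pos) hEpos)
        (sub_neg.mpr (hsort hj))
    nlinarith
  -- sum splitting
  have hsplit : ∀ f : Fin M → ℝ,
      ∑ i, f i = ∑ i ∈ Finset.Iic m, f i + ∑ i ∈ Finset.Ioi m, f i := by
    intro f
    have h1 : Finset.univ.filter (fun i : Fin M => i ≤ m) = Finset.Iic m := by
      ext i; simp
    have h2 : Finset.univ.filter (fun i : Fin M => ¬ i ≤ m) = Finset.Ioi m := by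
      ext i; simp [not_le]
    rw [← h1, ← h2, Finset.sum_filter_add_sum_filter_not]
  have hS0val : S0 = (∑ i ∈ Finset.Iic m, t i) - t m * c m := by
    rw [hS0def, hsplit (fun i => t i * (1 - c i))]
    have hz : ∑ i ∈ Finset.Ioi m, t i * (1 - c i) = 0 := by
      apply Finset.sum_eq_zero
      intro i hi
      rw [hup i (Finset.mem_Ioi.mp hi)]; ring
    rw [hz, add_zero]
    have hsub : ∑ i ∈ Finset.Iic m, t i * (1 - c i)
        = ∑ i ∈ Finset.Iic m, t i - ∑ i ∈ Finset.Iic m, t i * c i := by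
      rw [← Finset.sum_sub_distrib]; congr 1; ext i; ring
    rw [hsub]
    congr 1
    rw [Finset.sum_eq_single_of_mem m (Finset.mem_Iic.mpr le_rfl)]
    intro i hi hne
    rw [hdown i (lt_of_le_of_ne (Finset.mem_Iic.mp hi) hne)]; ring
  have hP0val : P0 = (∑ j ∈ Finset.Ioi m, t j * ρ j) + t m * ρ m * c m := by
    rw [hP0def, hsplit (fun k => t k * ρ k * c k)]
    have h1 : ∑ i ∈ Finset.Iic m, t i * ρ i * c i = t m * ρ m * c m := by
      rw [Finset.sum_eq_single_of_mem m (Finset.mem_Iic.mpr le_rfl)]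
      intro i hi hne
      rw [hdown i (lt_of_le_of_ne (Finset.mem_Iic.mp hi) hne)]; ring
    have h2 : ∑ j ∈ Finset.Ioi m, t j * ρ j * c j = ∑ j ∈ Finset.Ioi m, t j * ρ j := by
      apply Finset.sum_congr rfl
      intro i hi
      rw [hup i (Finset.mem_Ioi.mp hi)]; ring
    rw [h1, h2]; ring
  -- conclude
  have hre : Real.exp (B * (∑ j ∈ Finset.Ioi m, t j * ρ j) + B * t m * ρ m * c m)
      = Real.exp (B * P0) := by
    congr 1; rw [hP0val]; ring
  have hEinv : Real.exp (B * P0) * E = 1 := by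
    rw [hEdef, ← Real.exp_add]; simp
  have h1 : (B * ρ m * S0 + 1) * E = 1 := by linear_combination -heq
  have hfin : B * ρ m * S0 + 1 = Real.exp (B * P0) :=
    mul_right_cancel₀ (ne_of_gt hEpos) (h1.trans hEinv.symm)
  rw [hre, ← hfin, hS0val]
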